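/- For any graph G and any n ≥ 0, γ_g′(G ∪ P′_{n+4}) ≤ γ_g′(G ∪ P″_4 ∪ P″_n), where unions are disjoint. -/

import Mathlib

open Finset

namespace DomGame

open scoped Classical

noncomputable section

variable {V : Type*}

/-- The closed neighborhood of `x` in `G`, as a `Finset`. -/
def closedNbr (G : SimpleGraph V) [Fintype V] (x : V) : Finset V :=
  Finset.univ.filter (fun y => y = x ∨ G.Adj x y)

lemma card_compl_lt (G : SimpleGraph V) [Fintype V] {S : Finset V} {x : V}
    (h : ¬ closedNbr G x ⊆ S) :
    (Finset.univ \ (S ∪ closedNbr G x)).card < (Finset.univ \ S).card := by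
  obtain ⟨v, hvN, hvS⟩ := Finset.not_subset.mp h
  apply Finset.card_lt_card
  have hsub : Finset.univ \ (S ∪ closedNbr G x) ⊆ Finset.univ \ S := by
    intro y hy
    simp only [Finset.mem_sdiff, Finset.mem_univ, Finset.mem_union, true_and, not_or] at hy ⊢
    exact hy.1
  exact (Finset.ssubset_iff_of_subset hsub).mpr ⟨v, by simp [hvS], by simp [hvN]⟩

/-- The value of the (partially dominated) domination game on `G|S`, with
`dom = true` meaning Dominator moves next, `dom = false` meaning Staller moves next.
A legal move is a vertex whose closed neighborhood contains a yet undominated vertex;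
Dominator minimizes, Staller maximizes the total number of moves. -/
def gameVal (G : SimpleGraph V) [Fintype V] (dom : Bool) (S : Finset V) : ℕ :=
  let moves := Finset.univ.filter (fun x => ¬ closedNbr G x ⊆ S)
  if h : moves.Nonempty then
    if dom then
      moves.attach.inf' (by simpa using h)
        (fun x => 1 + gameVal G false (S ∪ closedNbr G x.1))
    else
      moves.attach.sup' (by simpa using h)
        (fun x => 1 + gameVal G true (S ∪ closedNbr G x.1))
  else 0
termination_by (Finset.univ \ S).card
decreasing_by
  · exact card_compl_lt G (by simpa using (Finset.mem_filter.mp x.2).2)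
  · exact card_compl_lt G (by simpa using (Finset.mem_filter.mp x.2).2)

/-- The D-game domination number `γ_g(G)`. -/
def gammaD (G : SimpleGraph V) [Fintype V] : ℕ := gameVal G true ∅

/-- The S-game domination number `γ_g'(G)`. -/
def gammaS (G : SimpleGraph V) [Fintype V] : ℕ := gameVal G false ∅

/-- Value of the Staller-pass domination game on `G|S`: Staller may skip
(at most) one move during the game; the skipped turn is not counted.
`dom` tells whose turn it is, `canPass` whether Staller's pass is still available. -/
def spVal (G : SimpleGraph V) [Fintype V] (dom : Bool) (canPass : Bool) (S : Finset V) : ℕ :=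
  let moves := Finset.univ.filter (fun x => ¬ closedNbr G x ⊆ S)
  if h : moves.Nonempty then
    if dom then
      moves.attach.inf' (by simpa using h)
        (fun x => 1 + spVal G false canPass (S ∪ closedNbr G x.1))
    else
      if hc : canPass then
        max (moves.attach.sup' (by simpa using h)
              (fun x => 1 + spVal G true canPass (S ∪ closedNbr G x.1)))
            (spVal G true false S)
      else
        moves.attach.sup' (by simpa using h)
          (fun x => 1 + spVal G true canPass (S ∪ closedNbr G x.1))
  else 0
termination_by ((Finset.univ \ S).card, if canPass then 1 else 0)
decreasing_by
  · exact Prod.Lex.left _ _ (card_compl_lt G (by simpa using (Finset.mem_filter.mp x.2).2))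
  · exact Prod.Lex.left _ _ (card_compl_lt G (by simpa using (Finset.mem_filter.mp x.2).2))
  · simp only [hc, if_true]
    exact Prod.Lex.right _ (by norm_num)
  · exact Prod.Lex.left _ _ (card_compl_lt G (by simpa using (Finset.mem_filter.mp x.2).2))

/-- Value of the Dominator-pass domination game on `G|S`: Dominator may skip
(at most) one move during the game; the skipped turn is not counted. -/
def dpVal (G : SimpleGraph V) [Fintype V] (dom : Bool) (canPass : Bool) (S : Finset V) : ℕ :=
  let moves := Finset.univ.filter (fun x => ¬ closedNbr G x ⊆ S)
  if h : moves.Nonempty then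
    if dom then
      if hc : canPass then
        min (moves.attach.inf' (by simpa using h)
              (fun x => 1 + dpVal G false canPass (S ∪ closedNbr G x.1)))
            (dpVal G false false S)
      else
        moves.attach.inf' (by simpa using h)
          (fun x => 1 + dpVal G false canPass (S ∪ closedNbr G x.1))
    else
      moves.attach.sup' (by simpa using h)
        (fun x => 1 + dpVal G true canPass (S ∪ closedNbr G x.1))
  else 0
termination_by ((Finset.univ \ S).card, if canPass then 1 else 0)
decreasing_by
  · exact Prod.Lex.left _ _ (card_compl_lt G (by simpa using (Finset.mem_filter.mp x.2).2))
  · simp only [hc, if_true]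
    exact Prod.Lex.right _ (by norm_num)
  · exact Prod.Lex.left _ _ (card_compl_lt G (by simpa using (Finset.mem_filter.mp x.2).2))
  · exact Prod.Lex.left _ _ (card_compl_lt G (by simpa using (Finset.mem_filter.mp x.2).2))

/-- The graph `G_{uv}`: obtained from `G - uv` by adding two new vertices
`u' = Sum.inr false` and `v' = Sum.inr true` together with the edges `u v'` and `v u'`. -/
def cutGraph (G : SimpleGraph V) (u v : V) : SimpleGraph (V ⊕ Bool) :=
  SimpleGraph.fromRel (fun x y =>
    match x, y with
    | Sum.inl a, Sum.inl b => G.Adj a b ∧ ¬ (a = u ∧ b = v) ∧ ¬ (a = v ∧ b = u)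
    | Sum.inl a, Sum.inr b => (b = false ∧ a = v) ∨ (b = true ∧ a = u)
    | _, _ => False)

/-- The set of vertices of `G_{uv}` declared dominated, given that `B ⊆ V(G)` is
declared dominated: `B` together with the two new vertices `u'` and `v'`. -/
def cutDom [DecidableEq V] (B : Finset V) : Finset (V ⊕ Bool) :=
  B.image Sum.inl ∪ {Sum.inr false, Sum.inr true}

/-- Disjoint union of two simple graphs. -/
def disjUnion {α β : Type*} (G : SimpleGraph α) (H : SimpleGraph β) :
    SimpleGraph (α ⊕ β) :=
  SimpleGraph.fromRel (fun x y =>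
    match x, y with
    | Sum.inl a, Sum.inl b => G.Adj a b
    | Sum.inr a, Sum.inr b => H.Adj a b
    | _, _ => False)

/-- The disjoint union of `k` paths, the `i`-th on `size i` vertices
(consecutive vertices of each `Fin (size i)` being adjacent). -/
def sigmaPathGraph (k : ℕ) (size : Fin k → ℕ) :
    SimpleGraph (Σ i : Fin k, Fin (size i)) :=
  SimpleGraph.fromRel (fun x y => x.1 = y.1 ∧ x.2.val + 1 = y.2.val)

/-- Vertex set of the three-legged spider `T_{p,q,r}`:
the center together with three legs on `4p`, `4q` and `4r` vertices. -/
abbrev SpiderV (p q r : ℕ) := Unit ⊕ (Fin (4*p) ⊕ (Fin (4*q) ⊕ Fin (4*r)))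

/-- The three-legged spider `T_{p,q,r}`, obtained from paths `P_{4p+1}`, `P_{4q+1}`,
`P_{4r+1}` by identifying one end-vertex of each into the center. In each leg,
vertex `0` is adjacent to the center, and vertices `i`, `i+1` are adjacent. -/
def spider (p q r : ℕ) : SimpleGraph (SpiderV p q r) :=
  SimpleGraph.fromRel (fun x y =>
    match x, y with
    | Sum.inl _, Sum.inr (Sum.inl i) => i.val = 0
    | Sum.inl _, Sum.inr (Sum.inr (Sum.inl i)) => i.val = 0
    | Sum.inl _, Sum.inr (Sum.inr (Sum.inr i)) => i.val = 0
    | Sum.inr (Sum.inl i), Sum.inr (Sum.inl j) => i.val + 1 = j.val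
    | Sum.inr (Sum.inr (Sum.inl i)), Sum.inr (Sum.inr (Sum.inl j)) => i.val + 1 = j.val
    | Sum.inr (Sum.inr (Sum.inr i)), Sum.inr (Sum.inr (Sum.inr j)) => i.val + 1 = j.val
    | _, _ => False)

/-- The weight `w(P'_{4q+r}) = w(P''_{4q+r}) = 2q + c_r` with
`c_0 = 0`, `c_1 = 1`, `c_2 = 3/2`, `c_3 = 7/4`, as a function of `n = 4q + r`. -/
def pathWeight (n : ℕ) : ℚ :=
  2 * (n / 4 : ℕ) +
    (if n % 4 = 0 then 0 else if n % 4 = 1 then 1 else if n % 4 = 2 then 3/2 else 7/4)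


section API
variable {G : SimpleGraph V} [Fintype V] {S T : Finset V} {x y : V}

lemma mem_closedNbr : y ∈ closedNbr G x ↔ y = x ∨ G.Adj x y := by
  simp [closedNbr]

lemma self_mem_closedNbr : x ∈ closedNbr G x := mem_closedNbr.mpr (Or.inl rfl)

lemma gameVal_eq_zero (d : Bool) (h : ∀ x : V, closedNbr G x ⊆ S) :
    gameVal G d S = 0 := by
  rw [gameVal]
  simp [h]

lemma gameVal_true_le (hx : ¬ closedNbr G x ⊆ S) :
    gameVal G true S ≤ 1 + gameVal G false (S ∪ closedNbr G x) := by
  rw [gameVal]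
  have hne : (Finset.univ.filter (fun z => ¬ closedNbr G z ⊆ S)).Nonempty :=
    ⟨x, by simp [hx]⟩
  simp only [hne, dif_pos, if_pos]
  exact Finset.inf'_le _ (Finset.mem_attach _ ⟨x, by simp [hx]⟩)

lemma le_gameVal_false (hx : ¬ closedNbr G x ⊆ S) :
    1 + gameVal G true (S ∪ closedNbr G x) ≤ gameVal G false S := by
  conv_rhs => rw [gameVal]
  have hne : (Finset.univ.filter (fun z => ¬ closedNbr G z ⊆ S)).Nonempty :=
    ⟨x, by simp [hx]⟩
  simp only [hne, dif_pos]
  rw [if_neg (by simp)]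
  have hmem : x ∈ Finset.univ.filter (fun z => ¬ closedNbr G z ⊆ S) := by
    simp only [Finset.mem_filter, Finset.mem_univ, true_and]; exact hx
  exact Finset.le_sup' (fun z => 1 + gameVal G true (S ∪ closedNbr G z.1))
    (Finset.mem_attach _ ⟨x, hmem⟩)

lemma gameVal_false_le {k : ℕ}
    (h : ∀ x : V, ¬ closedNbr G x ⊆ S → 1 + gameVal G true (S ∪ closedNbr G x) ≤ k) :
    gameVal G false S ≤ k := by
  rw [gameVal]
  by_cases hne : (Finset.univ.filter (fun z => ¬ closedNbr G z ⊆ S)).Nonempty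
  · simp only [hne, dif_pos]
    rw [if_neg (by simp)]
    apply Finset.sup'_le
    rintro ⟨z, hz⟩ -
    exact h z (by simpa using (Finset.mem_filter.mp hz).2)
  · simp [hne]

lemma le_gameVal_true {k : ℕ} (hne : ¬ closedNbr G y ⊆ S)
    (h : ∀ x : V, ¬ closedNbr G x ⊆ S → k ≤ 1 + gameVal G false (S ∪ closedNbr G x)) :
    k ≤ gameVal G true S := by
  rw [gameVal]
  have hne' : (Finset.univ.filter (fun z => ¬ closedNbr G z ⊆ S)).Nonempty :=
    ⟨y, by simp [hne]⟩
  simp only [hne', dif_pos, if_pos]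
  apply Finset.le_inf'
  rintro ⟨z, hz⟩ -
  exact h z (by simpa using (Finset.mem_filter.mp hz).2)

end API

section CP

lemma cp_and_waste (G : SimpleGraph V) [Fintype V] :
    ∀ m : ℕ, ∀ S : Finset V, (Finset.univ \ S).card = m →
      (∀ T : Finset V, ∀ d : Bool, S ⊆ T → gameVal G d T ≤ gameVal G d S) ∧
      (gameVal G true S ≤ 1 + gameVal G false S) := by
  intro m
  induction m using Nat.strong_induction_on with
  | _ m IH =>
  intro S hm
  have hi : ∀ T d, S ⊆ T → gameVal G d T ≤ gameVal G d S := by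
    intro T d hST
    by_cases hTne : ∃ y : V, ¬ closedNbr G y ⊆ T
    · obtain ⟨y0, hy0⟩ := hTne
      have hy0S : ¬ closedNbr G y0 ⊆ S := fun h => hy0 (h.trans hST)
      cases d with
      | false =>
        apply gameVal_false_le
        intro x hxT
        have hxS : ¬ closedNbr G x ⊆ S := fun h => hxT (h.trans hST)
        have hlt : (Finset.univ \ (S ∪ closedNbr G x)).card < m := hm ▸ card_compl_lt G hxS
        have h1 : gameVal G true (T ∪ closedNbr G x) ≤ gameVal G true (S ∪ closedNbr G x) :=
          (IH _ hlt _ rfl).1 (T ∪ closedNbr G x) true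
            (Finset.union_subset_union_left hST)
        have h2 := le_gameVal_false hxS
        omega
      | true =>
        apply le_gameVal_true hy0S
        intro x hxS
        have hlt : (Finset.univ \ (S ∪ closedNbr G x)).card < m := hm ▸ card_compl_lt G hxS
        by_cases hxT : closedNbr G x ⊆ T
        · have h1 : gameVal G true T ≤ gameVal G true (S ∪ closedNbr G x) :=
            (IH _ hlt _ rfl).1 T true (Finset.union_subset hST hxT)
          have h2 := (IH _ hlt _ rfl).2
          omega
        · have h1 := gameVal_true_le hxT
          have h2 : gameVal G false (T ∪ closedNbr G x) ≤ gameVal G false (S ∪ closedNbr G x) :=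
            (IH _ hlt _ rfl).1 (T ∪ closedNbr G x) false
              (Finset.union_subset_union_left hST)
          omega
    · push_neg at hTne
      simp [gameVal_eq_zero d hTne]
  have hii : gameVal G true S ≤ 1 + gameVal G false S := by
    by_cases hSne : ∃ x : V, ¬ closedNbr G x ⊆ S
    · obtain ⟨x, hx⟩ := hSne
      have h1 := gameVal_true_le hx
      have h2 := hi (S ∪ closedNbr G x) false Finset.subset_union_left
      omega
    · push_neg at hSne
      simp [gameVal_eq_zero true hSne]
  exact ⟨hi, hii⟩

end CP

lemma gameVal_mono (G : SimpleGraph V) [Fintype V] {S T : Finset V} (hST : S ⊆ T) (d : Bool) :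
    gameVal G d T ≤ gameVal G d S :=
  (cp_and_waste G _ S rfl).1 T d hST

lemma gameVal_waste (G : SimpleGraph V) [Fintype V] (S : Finset V) :
    gameVal G true S ≤ 1 + gameVal G false S :=
  (cp_and_waste G _ S rfl).2

/-- Simulation lemma. -/
lemma sim {V₁ V₂ : Type*} [Fintype V₁] [Fintype V₂]
    (G₁ : SimpleGraph V₁) (G₂ : SimpleGraph V₂) (f : V₂ → V₁)
    (hA : ∀ y z, z ∈ closedNbr G₂ y → f z ∈ closedNbr G₁ (f y))
    (hB : ∀ x w, f w ∈ closedNbr G₁ x →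
      ∃ y, w ∈ closedNbr G₂ y ∧ ∀ z ∈ closedNbr G₂ y, f z ∈ closedNbr G₁ x) :
    ∀ m : ℕ, ∀ S₁ : Finset V₁, ∀ S₂ : Finset V₂, (Finset.univ \ S₂).card = m →
      (∀ v : V₁, v ∉ S₁ → ∃ w, w ∉ S₂ ∧ f w = v) →
      ∀ d : Bool, gameVal G₁ d S₁ ≤ gameVal G₂ d S₂ := by
  intro m
  induction m using Nat.strong_induction_on with
  | _ m IH =>
  intro S₁ S₂ hm hinv d
  have key : ∀ x : V₁, ¬ closedNbr G₁ x ⊆ S₁ →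
      ∃ y : V₂, ¬ closedNbr G₂ y ⊆ S₂ ∧
        (∀ v : V₁, v ∉ S₁ ∪ closedNbr G₁ x →
          ∃ w, w ∉ S₂ ∪ closedNbr G₂ y ∧ f w = v) := by
    intro x hx
    obtain ⟨v, hvN, hvS⟩ := Finset.not_subset.mp hx
    obtain ⟨w, hwS, hfw⟩ := hinv v hvS
    obtain ⟨y, hwy, hy⟩ := hB x w (hfw ▸ hvN)
    refine ⟨y, fun hsub => hwS (hsub hwy), ?_⟩
    intro u hu
    rw [Finset.mem_union] at hu
    push_neg at hu
    obtain ⟨w', hw'S, hfw'⟩ := hinv u hu.1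
    refine ⟨w', ?_, hfw'⟩
    rw [Finset.mem_union]
    push_neg
    exact ⟨hw'S, fun hw'y => hu.2 (hfw' ▸ hy w' hw'y)⟩
  cases d with
  | false =>
    apply gameVal_false_le
    intro x hx
    obtain ⟨y, hy, hinv'⟩ := key x hx
    have hlt : (Finset.univ \ (S₂ ∪ closedNbr G₂ y)).card < m := hm ▸ card_compl_lt G₂ hy
    have h1 : gameVal G₁ true (S₁ ∪ closedNbr G₁ x) ≤ gameVal G₂ true (S₂ ∪ closedNbr G₂ y) :=
      IH _ hlt _ _ rfl hinv' true
    have h2 := le_gameVal_false hy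
    omega
  | true =>
    by_cases h2ne : ∃ y : V₂, ¬ closedNbr G₂ y ⊆ S₂
    · obtain ⟨y0, hy0⟩ := h2ne
      apply le_gameVal_true hy0
      intro y hy
      have hlt : (Finset.univ \ (S₂ ∪ closedNbr G₂ y)).card < m := hm ▸ card_compl_lt G₂ hy
      by_cases hfy : closedNbr G₁ (f y) ⊆ S₁
      · -- wasted Dominator move on the right
        have hinv' : ∀ v : V₁, v ∉ S₁ → ∃ w, w ∉ S₂ ∪ closedNbr G₂ y ∧ f w = v := by
          intro u hu
          obtain ⟨w', hw'S, hfw'⟩ := hinv u hu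
          refine ⟨w', ?_, hfw'⟩
          rw [Finset.mem_union]
          push_neg
          exact ⟨hw'S, fun hw'y => hu (hfw' ▸ hfy (hA y w' hw'y))⟩
        have h1 := gameVal_waste G₁ S₁
        have h2 : gameVal G₁ false S₁ ≤ gameVal G₂ false (S₂ ∪ closedNbr G₂ y) :=
          IH _ hlt _ _ rfl hinv' false
        omega
      · have hinv' : ∀ v : V₁, v ∉ S₁ ∪ closedNbr G₁ (f y) →
            ∃ w, w ∉ S₂ ∪ closedNbr G₂ y ∧ f w = v := by
          intro u hu
          rw [Finset.mem_union] at hu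
          push_neg at hu
          obtain ⟨w', hw'S, hfw'⟩ := hinv u hu.1
          refine ⟨w', ?_, hfw'⟩
          rw [Finset.mem_union]
          push_neg
          exact ⟨hw'S, fun hw'y => hu.2 (hfw' ▸ hA y w' hw'y)⟩
        have h1 := gameVal_true_le hfy
        have h2 : gameVal G₁ false (S₁ ∪ closedNbr G₁ (f y)) ≤
            gameVal G₂ false (S₂ ∪ closedNbr G₂ y) := IH _ hlt _ _ rfl hinv' false
        omega
    · push_neg at h2ne
      have hleft : ∀ x : V₁, closedNbr G₁ x ⊆ S₁ := by
        intro x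
        by_contra hx
        obtain ⟨y, hy, -⟩ := key x hx
        exact hy (h2ne y)
      simp [gameVal_eq_zero true hleft]

section Concrete

lemma disjUnion_adj_inl_inl {β γ : Type*} {G : SimpleGraph β} {H : SimpleGraph γ} {a b : β} :
    (disjUnion G H).Adj (Sum.inl a) (Sum.inl b) ↔ G.Adj a b := by
  constructor
  · rintro ⟨h1, h2 | h2⟩
    · exact h2
    · exact h2.symm
  · intro h
    exact ⟨by simp [h.ne], Or.inl h⟩

lemma disjUnion_adj_inr_inr {β γ : Type*} {G : SimpleGraph β} {H : SimpleGraph γ} {a b : γ} :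
    (disjUnion G H).Adj (Sum.inr a) (Sum.inr b) ↔ H.Adj a b := by
  constructor
  · rintro ⟨h1, h2 | h2⟩
    · exact h2
    · exact h2.symm
  · intro h
    exact ⟨by simp [h.ne], Or.inl h⟩

lemma disjUnion_adj_inl_inr {β γ : Type*} {G : SimpleGraph β} {H : SimpleGraph γ} {a : β} {b : γ} :
    ¬ (disjUnion G H).Adj (Sum.inl a) (Sum.inr b) := by
  rintro ⟨h1, h2 | h2⟩ <;> exact h2

lemma disjUnion_adj_inr_inl {β γ : Type*} {G : SimpleGraph β} {H : SimpleGraph γ} {a : γ} {b : β} :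
    ¬ (disjUnion G H).Adj (Sum.inr a) (Sum.inl b) := by
  rintro ⟨h1, h2 | h2⟩ <;> exact h2

variable {α : Type*} [Fintype α]

/-- The projection map from `V(G ∪ P″_4 ∪ P″_n)` to `V(G ∪ P′_{n+4})`. -/
def f2 (n : ℕ) : (α ⊕ Fin 6) ⊕ Fin (n+2) → α ⊕ Fin (n+5)
  | Sum.inl (Sum.inl a) => Sum.inl a
  | Sum.inl (Sum.inr j) => Sum.inr ⟨min j.val 4, by omega⟩
  | Sum.inr j => Sum.inr ⟨min (if j.val = 0 then 5 else j.val + 4) (n+4), by omega⟩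

lemma f2_hA (G : SimpleGraph α) (n : ℕ) :
    ∀ y z : (α ⊕ Fin 6) ⊕ Fin (n+2),
      z ∈ closedNbr (disjUnion (disjUnion G (SimpleGraph.pathGraph 6))
          (SimpleGraph.pathGraph (n+2))) y →
      f2 n z ∈ closedNbr (disjUnion G (SimpleGraph.pathGraph (n+5))) (f2 n y) := by
  rintro ((a | j) | j) ((b | k) | k) hz <;>
    simp only [mem_closedNbr, f2, disjUnion_adj_inl_inl, disjUnion_adj_inr_inr,
      disjUnion_adj_inl_inr, disjUnion_adj_inr_inl, SimpleGraph.pathGraph_adj,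
      Sum.inl.injEq, Sum.inr.injEq, Fin.ext_iff, reduceCtorEq, or_false, false_or] at hz ⊢ <;>
    first
      | exact hz
      | (split_ifs at hz ⊢ <;> omega)
      | omega

lemma f2_hB (G : SimpleGraph α) (n : ℕ) :
    ∀ (x : α ⊕ Fin (n+5)) (w : (α ⊕ Fin 6) ⊕ Fin (n+2)),
      f2 n w ∈ closedNbr (disjUnion G (SimpleGraph.pathGraph (n+5))) x →
      ∃ y, w ∈ closedNbr (disjUnion (disjUnion G (SimpleGraph.pathGraph 6))
              (SimpleGraph.pathGraph (n+2))) y ∧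
           ∀ z ∈ closedNbr (disjUnion (disjUnion G (SimpleGraph.pathGraph 6))
              (SimpleGraph.pathGraph (n+2))) y,
             f2 n z ∈ closedNbr (disjUnion G (SimpleGraph.pathGraph (n+5))) x := by
  rintro (a | i) ((b | j) | j) hw
  · -- x = inl a, w = inl (inl b)
    refine ⟨Sum.inl (Sum.inl a), ?_, ?_⟩
    · simp only [mem_closedNbr, f2, disjUnion_adj_inl_inl, disjUnion_adj_inr_inr, disjUnion_adj_inl_inr, disjUnion_adj_inr_inl, SimpleGraph.pathGraph_adj, Sum.inl.injEq, Sum.inr.injEq, Fin.ext_iff, reduceCtorEq, or_false, false_or, or_true, true_or] at hw ⊢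
      exact hw
    · rintro ((c | k) | k) hz <;> simp only [mem_closedNbr, f2, disjUnion_adj_inl_inl, disjUnion_adj_inr_inr, disjUnion_adj_inl_inr, disjUnion_adj_inr_inl, SimpleGraph.pathGraph_adj, Sum.inl.injEq, Sum.inr.injEq, Fin.ext_iff, reduceCtorEq, or_false, false_or, or_true, true_or] at hz ⊢
      exact hz
  · exact absurd hw (by simp [mem_closedNbr, f2, disjUnion_adj_inl_inl, disjUnion_adj_inr_inr, disjUnion_adj_inl_inr, disjUnion_adj_inr_inl, SimpleGraph.pathGraph_adj, Sum.inl.injEq, Sum.inr.injEq, Fin.ext_iff, reduceCtorEq, or_false, false_or, or_true, true_or])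
  · exact absurd hw (by simp only [mem_closedNbr, f2, disjUnion_adj_inl_inr, reduceCtorEq, or_false, false_or, not_false_eq_true])
  · exact absurd hw (by simp [mem_closedNbr, f2, disjUnion_adj_inl_inl, disjUnion_adj_inr_inr, disjUnion_adj_inl_inr, disjUnion_adj_inr_inl, SimpleGraph.pathGraph_adj, Sum.inl.injEq, Sum.inr.injEq, Fin.ext_iff, reduceCtorEq, or_false, false_or, or_true, true_or])
  · -- x = inr i, w = inl (inr j)
    simp only [mem_closedNbr, f2, disjUnion_adj_inl_inl, disjUnion_adj_inr_inr, disjUnion_adj_inl_inr, disjUnion_adj_inr_inl, SimpleGraph.pathGraph_adj, Sum.inl.injEq, Sum.inr.injEq, Fin.ext_iff, reduceCtorEq, or_false, false_or, or_true, true_or] at hw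
    have hj6 := j.isLt
    have hi5 := i.isLt
    by_cases hc : 5 ≤ j.val ∧ i.val ≤ 3
    · refine ⟨Sum.inl (Sum.inr ⟨4, by omega⟩), ?_, ?_⟩
      · simp only [mem_closedNbr, f2, disjUnion_adj_inl_inl, disjUnion_adj_inr_inr, disjUnion_adj_inl_inr, disjUnion_adj_inr_inl, SimpleGraph.pathGraph_adj, Sum.inl.injEq, Sum.inr.injEq, Fin.ext_iff, reduceCtorEq, or_false, false_or, or_true, true_or]
        omega
      · rintro ((c | k) | k) hz <;> simp only [mem_closedNbr, f2, disjUnion_adj_inl_inl, disjUnion_adj_inr_inr, disjUnion_adj_inl_inr, disjUnion_adj_inr_inl, SimpleGraph.pathGraph_adj, Sum.inl.injEq, Sum.inr.injEq, Fin.ext_iff, reduceCtorEq, or_false, false_or, or_true, true_or] at hz ⊢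
        omega
    · refine ⟨Sum.inl (Sum.inr ⟨min i.val 5, by omega⟩), ?_, ?_⟩
      · simp only [mem_closedNbr, f2, disjUnion_adj_inl_inl, disjUnion_adj_inr_inr, disjUnion_adj_inl_inr, disjUnion_adj_inr_inl, SimpleGraph.pathGraph_adj, Sum.inl.injEq, Sum.inr.injEq, Fin.ext_iff, reduceCtorEq, or_false, false_or, or_true, true_or]
        omega
      · rintro ((c | k) | k) hz <;> simp only [mem_closedNbr, f2, disjUnion_adj_inl_inl, disjUnion_adj_inr_inr, disjUnion_adj_inl_inr, disjUnion_adj_inr_inl, SimpleGraph.pathGraph_adj, Sum.inl.injEq, Sum.inr.injEq, Fin.ext_iff, reduceCtorEq, or_false, false_or, or_true, true_or] at hz ⊢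
        omega
  · -- x = inr i, w = inr j
    simp only [mem_closedNbr, f2, disjUnion_adj_inl_inl, disjUnion_adj_inr_inr, disjUnion_adj_inl_inr, disjUnion_adj_inr_inl, SimpleGraph.pathGraph_adj, Sum.inl.injEq, Sum.inr.injEq, Fin.ext_iff, reduceCtorEq, or_false, false_or, or_true, true_or] at hw
    have hj := j.isLt
    have hi := i.isLt
    by_cases hc1 : (min (if j.val = 0 then 5 else j.val + 4) (n+4)) = i.val + 1
    · refine ⟨Sum.inr ⟨j.val - 1, by omega⟩, ?_, ?_⟩
      · simp only [mem_closedNbr, f2, disjUnion_adj_inl_inl, disjUnion_adj_inr_inr, disjUnion_adj_inl_inr, disjUnion_adj_inr_inl, SimpleGraph.pathGraph_adj, Sum.inl.injEq, Sum.inr.injEq, Fin.ext_iff, reduceCtorEq, or_false, false_or, or_true, true_or]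
        omega
      · rintro ((c | k) | k) hz <;> simp only [mem_closedNbr, f2, disjUnion_adj_inl_inl, disjUnion_adj_inr_inr, disjUnion_adj_inl_inr, disjUnion_adj_inr_inl, SimpleGraph.pathGraph_adj, Sum.inl.injEq, Sum.inr.injEq, Fin.ext_iff, reduceCtorEq, or_false, false_or, or_true, true_or] at hz ⊢
        have hk := k.isLt
        split_ifs at hz hc1 ⊢ <;> omega
    · by_cases hc2 : (min (if j.val = 0 then 5 else j.val + 4) (n+4)) + 1 = i.val
      · refine ⟨Sum.inr ⟨j.val + 1, by split_ifs at hc2 <;> omega⟩, ?_, ?_⟩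
        · simp only [mem_closedNbr, f2, disjUnion_adj_inl_inl, disjUnion_adj_inr_inr, disjUnion_adj_inl_inr, disjUnion_adj_inr_inl, SimpleGraph.pathGraph_adj, Sum.inl.injEq, Sum.inr.injEq, Fin.ext_iff, reduceCtorEq, or_false, false_or, or_true, true_or]
        · rintro ((c | k) | k) hz <;> simp only [mem_closedNbr, f2, disjUnion_adj_inl_inl, disjUnion_adj_inr_inr, disjUnion_adj_inl_inr, disjUnion_adj_inr_inl, SimpleGraph.pathGraph_adj, Sum.inl.injEq, Sum.inr.injEq, Fin.ext_iff, reduceCtorEq, or_false, false_or, or_true, true_or] at hz ⊢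
          have hk := k.isLt
          split_ifs at hz hc2 ⊢ <;> omega
      · refine ⟨Sum.inr j, ?_, ?_⟩
        · simp only [mem_closedNbr, f2, disjUnion_adj_inl_inl, disjUnion_adj_inr_inr, disjUnion_adj_inl_inr, disjUnion_adj_inr_inl, SimpleGraph.pathGraph_adj, Sum.inl.injEq, Sum.inr.injEq, Fin.ext_iff, reduceCtorEq, or_false, false_or, or_true, true_or]
        · rintro ((c | k) | k) hz <;> simp only [mem_closedNbr, f2, disjUnion_adj_inl_inl, disjUnion_adj_inr_inr, disjUnion_adj_inl_inr, disjUnion_adj_inr_inl, SimpleGraph.pathGraph_adj, Sum.inl.injEq, Sum.inr.injEq, Fin.ext_iff, reduceCtorEq, or_false, false_or, or_true, true_or] at hz ⊢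
          have hk := k.isLt
          split_ifs at hw hz hc1 hc2 ⊢ <;> omega

end Concrete

theorem split_long_path' {α : Type*} [Fintype α] (G : SimpleGraph α) (n : ℕ) :
    gameVal (disjUnion G (SimpleGraph.pathGraph (n+5))) false {Sum.inr 0}
      ≤ gameVal (disjUnion (disjUnion G (SimpleGraph.pathGraph 6))
            (SimpleGraph.pathGraph (n+2))) false
          {Sum.inl (Sum.inr 0), Sum.inl (Sum.inr (5 : Fin 6)),
            Sum.inr 0, Sum.inr (Fin.last (n+1))} := by
  apply sim (disjUnion G (SimpleGraph.pathGraph (n+5)))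
    (disjUnion (disjUnion G (SimpleGraph.pathGraph 6)) (SimpleGraph.pathGraph (n+2)))
    (f2 n) (f2_hA G n) (f2_hB G n) _ _ _ rfl ?_ false
  rintro (a | i) hv
  · refine ⟨Sum.inl (Sum.inl a), ?_, rfl⟩
    simp
  · have hi : i.val < n + 5 := i.isLt
    have h1 : i.val ≠ 0 := by
      intro h
      exact hv (by
        simp only [Finset.mem_singleton, Sum.inr.injEq]
        exact Fin.ext (by simpa using h))
    by_cases h4 : i.val ≤ 4
    · refine ⟨Sum.inl (Sum.inr ⟨i.val, by omega⟩), ?_, ?_⟩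
      · simp only [Finset.mem_insert, Finset.mem_singleton, Sum.inl.injEq, Sum.inr.injEq,
          reduceCtorEq, or_false, false_or, Fin.ext_iff]
        simp only [Fin.val_zero, Fin.val_last]
        push_neg
        refine ⟨?_, ?_⟩ <;> omega
      · simp only [f2, Sum.inr.injEq]
        exact Fin.ext (by simp; omega)
    · refine ⟨Sum.inr ⟨i.val - 4, by omega⟩, ?_, ?_⟩
      · simp only [Finset.mem_insert, Finset.mem_singleton, Sum.inl.injEq, Sum.inr.injEq,
          reduceCtorEq, or_false, false_or, Fin.ext_iff]
        simp only [Fin.val_zero, Fin.val_last]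
        push_neg
        refine ⟨?_, ?_⟩ <;> omega
      · simp only [f2, Sum.inr.injEq]
        refine Fin.ext ?_
        dsimp only
        split_ifs <;> omega

/-- For any graph `G` and `n ≥ 0`,
`γ_g′(G ∪ P′_{n+4}) ≤ γ_g′(G ∪ P″_4 ∪ P″_n)` (disjoint unions). Here
`P′_{n+4}` is the path on `n+5` vertices with one end dominated, `P″_4` is the
path on `6` vertices with both ends dominated, and `P″_n` is the path on `n+2`
vertices with both ends dominated. -/
theorem split_long_path {α : Type*} [Fintype α] (G : SimpleGraph α) (n : ℕ) :
    gameVal (disjUnion G (SimpleGraph.pathGraph (n+5))) false {Sum.inr 0}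
      ≤ gameVal (disjUnion (disjUnion G (SimpleGraph.pathGraph 6))
            (SimpleGraph.pathGraph (n+2))) false
          {Sum.inl (Sum.inr 0), Sum.inl (Sum.inr (5 : Fin 6)),
            Sum.inr 0, Sum.inr (Fin.last (n+1))} := split_long_path' G n

end

end DomGame
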